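/- Suppose n points x₁, …, x₃ ∈ ℝ receive nonnegative budget increments over times 1..T where at each time t the increment b_t > 0 is added to a point with the currently smallest accumulated budget among the three. Then at any time t, the minimum accumulated budget among the three points is at least (S_t − 2·max_{s≤t} b_s)/3, where S_t = ∑_{s=1}^t b_s. -/

import Mathlib

/-- Equipartition inequality (eq:equipartition) with `k = 0`: greedy minimum-budget
allocation among three points keeps every accumulated budget at least
`(S_t - 2·max_{s≤t} b_s)/3`. -/
theorem stmt12 (T : ℕ) (b : ℕ → ℝ) (hb : ∀ s, 1 ≤ s → s ≤ T → 0 < b s)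
    (X : ℕ → Fin 3) (B : Fin 3 → ℕ → ℝ)
    (hB : ∀ j t, B j t = ∑ s ∈ Finset.Icc 1 t, if X s = j then b s else 0)
    (hgreedy : ∀ t, 1 ≤ t → t ≤ T → ∀ j, B (X t) (t - 1) ≤ B j (t - 1))
    (t : ℕ) (ht1 : 1 ≤ t) (htT : t ≤ T) (j : Fin 3) :
    ((∑ s ∈ Finset.Icc 1 t, b s)
        - 2 * (Finset.Icc 1 t).sup' (Finset.nonempty_Icc.2 ht1) b) / 3 ≤ B j t := by
  have hstep : ∀ i u, B i (u+1) = B i u + (if X (u+1) = i then b (u+1) else 0) := by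
    intro i u
    rw [hB, hB, Finset.sum_Icc_succ_top (by omega : 1 ≤ u + 1)]
  have hpos : ∀ i u, u ≤ T → 0 ≤ B i u := by
    intro i u huT
    rw [hB]
    apply Finset.sum_nonneg
    intro s hs
    simp only [Finset.mem_Icc] at hs
    have := hb s hs.1 (le_trans hs.2 huT)
    split_ifs <;> linarith
  -- key invariant: any two counters differ by at most the max increment so far
  have key : ∀ u (hu1 : 1 ≤ u), u ≤ T → ∀ i k : Fin 3,
      B i u ≤ B k u + (Finset.Icc 1 u).sup' (Finset.nonempty_Icc.2 hu1) b := by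
    intro u hu1
    induction u, hu1 using Nat.le_induction with
    | base =>
      intro hT i k
      have hb1 := hb 1 le_rfl hT
      have hBi : B i 1 ≤ b 1 := by
        rw [hB]
        simp only [Finset.Icc_self, Finset.sum_singleton]
        split_ifs <;> linarith
      have hBk : 0 ≤ B k 1 := hpos k 1 hT
      have hsup : (Finset.Icc 1 1).sup' (Finset.nonempty_Icc.2 le_rfl) b = b 1 := by
        simp
      rw [hsup]
      linarith
    | succ u hu IH =>
      intro hT i k
      have huT : u ≤ T := by omega
      have hne : (Finset.Icc 1 u).Nonempty := Finset.nonempty_Icc.2 hu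
      have hMt : (Finset.Icc 1 u).sup' hne b ≤
          (Finset.Icc 1 (u+1)).sup' (Finset.nonempty_Icc.2 (by omega)) b := by
        apply Finset.sup'_le
        intro s hs
        simp only [Finset.mem_Icc] at hs
        exact Finset.le_sup' b (by simp only [Finset.mem_Icc]; omega)
      have hbM : b (u+1) ≤ (Finset.Icc 1 (u+1)).sup' (Finset.nonempty_Icc.2 (by omega)) b :=
        Finset.le_sup' b (by simp)
      have hbu1 := hb (u+1) (by omega) hT
      have hmonok : B k u ≤ B k (u+1) := by
        rw [hstep]; split_ifs <;> linarith
      have hg := hgreedy (u+1) (by omega) hT k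
      simp only [Nat.add_sub_cancel] at hg
      by_cases hix : X (u+1) = i
      · have hBi : B i (u+1) = B i u + b (u+1) := by rw [hstep]; simp [hix]
        rw [hix] at hg
        linarith
      · have hBi : B i (u+1) = B i u := by rw [hstep]; simp [hix]
        have := IH huT i k
        linarith
  set M := (Finset.Icc 1 t).sup' (Finset.nonempty_Icc.2 ht1) b with hM
  have hsum : (∑ i : Fin 3, B i t) = ∑ s ∈ Finset.Icc 1 t, b s := by
    simp only [hB]
    rw [Finset.sum_comm]
    apply Finset.sum_congr rfl
    intro s _
    simp [Finset.sum_ite_eq]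
  have hsplit : (∑ i : Fin 3, B i t)
      = B j t + ∑ i ∈ Finset.univ.erase j, B i t :=
    (Finset.add_sum_erase _ (fun i => B i t) (Finset.mem_univ j)).symm
  have herase : ∑ i ∈ Finset.univ.erase j, B i t ≤ 2 * (B j t + M) := by
    have hc : (Finset.univ.erase j).card = 2 := by
      simp [Finset.card_erase_of_mem]
    calc ∑ i ∈ Finset.univ.erase j, B i t
        ≤ (Finset.univ.erase j).card • (B j t + M) :=
          Finset.sum_le_card_nsmul _ _ _ (fun i _ => key t ht1 htT i j)
      _ = 2 * (B j t + M) := by rw [hc]; push_cast [nsmul_eq_mul]; ring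
  have : ∑ s ∈ Finset.Icc 1 t, b s ≤ 3 * B j t + 2 * M := by
    rw [← hsum, hsplit]; linarith
  linarith
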